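/- In the Black-Scholes setting, for fixed S, K, T > 0 and r, q ∈ ℝ, the call price tends to its intrinsic value as volatility vanishes and to the discounted spot as volatility explodes: lim_{σ → 0+} C(S,K,T,r,q,σ) = max(S·exp(−q·T) − K·exp(−r·T), 0) and lim_{σ → ∞} C(S,K,T,r,q,σ) = S·exp(−q·T). -/

import Mathlib

open Real

/-- Standard normal density. -/
noncomputable def stdNormalPdf (x : ℝ) : ℝ := Real.exp (-x ^ 2 / 2) / Real.sqrt (2 * Real.pi)

/-- Standard normal cumulative distribution function. -/
noncomputable def stdNormalCdf (x : ℝ) : ℝ := ∫ t in Set.Iic x, stdNormalPdf t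

/-- Black-Scholes `d₁`. -/
noncomputable def bsD1 (S K T r q σ : ℝ) : ℝ :=
  (Real.log (S / K) + (r - q + σ ^ 2 / 2) * T) / (σ * Real.sqrt T)

/-- Black-Scholes `d₂`. -/
noncomputable def bsD2 (S K T r q σ : ℝ) : ℝ := bsD1 S K T r q σ - σ * Real.sqrt T

/-- Black-Scholes call option price. -/
noncomputable def bsCall (S K T r q σ : ℝ) : ℝ :=
  S * Real.exp (-q * T) * stdNormalCdf (bsD1 S K T r q σ) -
    K * Real.exp (-r * T) * stdNormalCdf (bsD2 S K T r q σ)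

open Filter
open MeasureTheory

lemma pdf_eq (x : ℝ) : stdNormalPdf x = Real.exp (-(1/2) * x ^ 2) / Real.sqrt (2 * π) := by
  simp only [stdNormalPdf]; ring_nf

lemma pdf_int : Integrable stdNormalPdf := by
  have h := (integrable_exp_neg_mul_sq (by norm_num : (0:ℝ) < 1/2)).div_const (Real.sqrt (2 * Real.pi))
  exact h.congr (Filter.Eventually.of_forall fun x => (pdf_eq x).symm)

lemma pdf_total : ∫ x, stdNormalPdf x = 1 := by
  have h := integral_gaussian (1/2)
  rw [show π / (1/2) = 2 * π by ring] at h
  simp only [pdf_eq]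
  rw [integral_div, h, div_self (by positivity)]

lemma cdf_top : Tendsto stdNormalCdf atTop (nhds 1) := by
  have h := tendsto_setIntegral_of_monotone (μ := volume) (f := stdNormalPdf)
    (s := fun x : ℝ => Set.Iic x) (fun i => measurableSet_Iic)
    (fun a b h => Set.Iic_subset_Iic.2 h) (by rw [Set.iUnion_Iic]; exact pdf_int.integrableOn)
  rw [Set.iUnion_Iic, setIntegral_univ, pdf_total] at h
  exact h

lemma cdf_bot : Tendsto stdNormalCdf atBot (nhds 0) := by
  have h := tendsto_setIntegral_of_antitone (μ := volume) (f := stdNormalPdf)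
    (s := fun x : ℝ => Set.Iic (-x)) (fun i => measurableSet_Iic)
    (fun a b h => Set.Iic_subset_Iic.2 (by linarith)) ⟨0, pdf_int.integrableOn⟩
  have he : ⋂ n : ℝ, Set.Iic (-n) = ∅ := by
    apply Set.eq_empty_of_forall_notMem
    intro x hx
    have := Set.mem_iInter.1 hx (-(x-1))
    simp at this; linarith
  rw [he] at h
  simp only [Measure.restrict_empty, integral_zero_measure] at h
  have h2 := h.comp (tendsto_neg_atBot_atTop : Tendsto (fun x : ℝ => -x) atBot atTop)
  refine h2.congr fun x => ?_
  simp [Function.comp, stdNormalCdf]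

lemma cdf_cont : Continuous stdNormalCdf := by
  have key : ∀ x, stdNormalCdf x = stdNormalCdf 0 + ∫ t in (0:ℝ)..x, stdNormalPdf t := by
    intro x
    have := intervalIntegral.integral_Iic_sub_Iic (f := stdNormalPdf) (μ := volume)
      pdf_int.integrableOn pdf_int.integrableOn (a := 0) (b := x)
    simp only [stdNormalCdf]; linarith
  rw [funext key]
  exact continuous_const.add (pdf_int.continuous_primitive 0)

lemma tendsto_nhds_add_atTop {f g : ℝ → ℝ} {l : Filter ℝ} {a : ℝ}
    (hf : Tendsto f l (nhds a)) (hg : Tendsto g l atTop) :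
    Tendsto (fun x => f x + g x) l atTop :=
  tendsto_atTop_add_left_of_le' l (a - 1)
    (hf.eventually (eventually_ge_nhds (by linarith : a - 1 < a))) hg

lemma tendsto_nhds_add_atBot {f g : ℝ → ℝ} {l : Filter ℝ} {a : ℝ}
    (hf : Tendsto f l (nhds a)) (hg : Tendsto g l atBot) :
    Tendsto (fun x => f x + g x) l atBot := by
  rw [← tendsto_neg_atTop_iff]
  exact (tendsto_nhds_add_atTop hf.neg (tendsto_neg_atTop_iff.2 hg)).congr fun x => by ring


/-- Limits of the Black-Scholes call price in the volatility: as `σ → 0+` the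
price tends to the intrinsic value, and as `σ → ∞` it tends to the discounted
spot `S·e^{-qT}`. -/
theorem bsCall_vol_limits (S K T r q : ℝ) (hS : 0 < S) (hK : 0 < K) (hT : 0 < T) :
    Tendsto (fun σ => bsCall S K T r q σ) (nhdsWithin 0 (Set.Ioi 0))
      (nhds (max (S * Real.exp (-q * T) - K * Real.exp (-r * T)) 0)) ∧
    Tendsto (fun σ => bsCall S K T r q σ) atTop (nhds (S * Real.exp (-q * T))) := by
  set c : ℝ := Real.sqrt T with hcdef
  have hc : 0 < c := Real.sqrt_pos.2 hT
  have hc2 : c ^ 2 = T := Real.sq_sqrt hT.le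
  set m : ℝ := Real.log (S / K) + (r - q) * T with hm
  set A : ℝ := S * Real.exp (-q * T) with hA
  set B : ℝ := K * Real.exp (-r * T) with hB
  have hApos : 0 < A := by positivity
  have hBpos : 0 < B := by positivity
  have hAB : A = B * Real.exp m := by
    rw [hA, hB, hm, Real.exp_add, Real.exp_log (div_pos hS hK),
      show K * Real.exp (-r*T) * (S / K * Real.exp ((r-q)*T))
        = S * (Real.exp (-r*T) * Real.exp ((r-q)*T)) from by field_simp,
      ← Real.exp_add, show -r*T + (r-q)*T = -q*T from by ring]
  -- formulas for d1, d2 away from 0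
  have hd1eq : ∀ σ : ℝ, σ ≠ 0 → bsD1 S K T r q σ = m / (σ * c) + σ * c / 2 := by
    intro σ hσ
    rw [bsD1, hm, ← hcdef]
    rw [show (Real.log (S / K) + (r - q + σ ^ 2 / 2) * T)
        = (Real.log (S / K) + (r - q) * T) + σ ^ 2 * T / 2 by ring]
    rw [add_div, ← hc2]
    congr 1
    field_simp
  have hd2eq : ∀ σ : ℝ, σ ≠ 0 → bsD2 S K T r q σ = m / (σ * c) - σ * c / 2 := by
    intro σ hσ
    rw [bsD2, hd1eq σ hσ, ← hcdef]
    ring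
  -- the two limits
  constructor
  · -- σ → 0+
    set l : Filter ℝ := nhdsWithin 0 (Set.Ioi 0) with hl
    have hmem : ∀ᶠ σ in l, σ ∈ Set.Ioi (0:ℝ) := self_mem_nhdsWithin
    have hinv : Tendsto (fun σ : ℝ => (σ * c)⁻¹) l atTop := by
      apply tendsto_inv_nhdsGT_zero.comp
      apply tendsto_nhdsWithin_of_tendsto_nhds_of_eventually_within
      · have : Tendsto (fun σ : ℝ => σ * c) (nhds 0) (nhds (0 * c)) :=
          (continuous_id.mul continuous_const).tendsto 0
        simpa using this.mono_left nhdsWithin_le_nhds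
      · filter_upwards [hmem] with σ hσ
        exact mul_pos hσ hc
    have hsc : Tendsto (fun σ : ℝ => σ * c / 2) l (nhds 0) := by
      have : Tendsto (fun σ : ℝ => σ * c / 2) (nhds 0) (nhds (0 * c / 2)) :=
        ((continuous_id.mul continuous_const).div_const 2).tendsto 0
      simpa using this.mono_left nhdsWithin_le_nhds
    have key : ∀ L1 L2 : ℝ,
        Tendsto (fun σ => stdNormalCdf (bsD1 S K T r q σ)) l (nhds L1) →
        Tendsto (fun σ => stdNormalCdf (bsD2 S K T r q σ)) l (nhds L2) →
        Tendsto (fun σ => bsCall S K T r q σ) l (nhds (A * L1 - B * L2)) := by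
      intro L1 L2 h1 h2
      exact (Tendsto.const_mul A h1).sub (Tendsto.const_mul B h2)
    rcases lt_trichotomy m 0 with hm0 | hm0 | hm0
    · -- m < 0 : both d1, d2 → -∞, price → 0, A < B
      have hAltB : A < B := by
        rw [hAB]
        nth_rewrite 2 [show B = B * 1 by ring]
        exact mul_lt_mul_of_pos_left (by simpa using Real.exp_lt_one_iff.2 hm0) hBpos
      have hfrac : Tendsto (fun σ : ℝ => m / (σ * c)) l atBot := by
        simp only [div_eq_mul_inv]
        exact Tendsto.const_mul_atTop_of_neg hm0 hinv
      have hd1 : Tendsto (fun σ => bsD1 S K T r q σ) l atBot := by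
        refine (tendsto_nhds_add_atBot hsc hfrac).congr' ?_
        filter_upwards [hmem] with σ hσ
        rw [hd1eq σ (ne_of_gt hσ)]; ring
      have hd2 : Tendsto (fun σ => bsD2 S K T r q σ) l atBot := by
        refine (tendsto_nhds_add_atBot (hsc.neg) hfrac).congr' ?_
        filter_upwards [hmem] with σ hσ
        rw [hd2eq σ (ne_of_gt hσ)]; ring
      have := key 0 0 (cdf_bot.comp hd1) (cdf_bot.comp hd2)
      simpa [max_eq_right (by linarith : A - B ≤ 0)] using this
    · -- m = 0 : d1, d2 → 0, A = B, price → (A - B) cdf 0 = 0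
      have hABeq : A = B := by rw [hAB, hm0]; simp
      have hd1 : Tendsto (fun σ => bsD1 S K T r q σ) l (nhds 0) := by
        refine hsc.congr' ?_
        filter_upwards [hmem] with σ hσ
        rw [hd1eq σ (ne_of_gt hσ), hm0]; simp
      have hd2 : Tendsto (fun σ => bsD2 S K T r q σ) l (nhds 0) := by
        refine (show Tendsto (fun σ : ℝ => -(σ * c / 2)) l (nhds 0) from by
          simpa using hsc.neg).congr' ?_
        filter_upwards [hmem] with σ hσ
        rw [hd2eq σ (ne_of_gt hσ), hm0]; simp
      have := key (stdNormalCdf 0) (stdNormalCdf 0)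
        ((cdf_cont.tendsto 0).comp hd1) ((cdf_cont.tendsto 0).comp hd2)
      have heq : A * stdNormalCdf 0 - B * stdNormalCdf 0 = 0 := by rw [hABeq]; ring
      rw [heq] at this
      simpa [max_eq_right (by linarith : A - B ≤ 0)] using this
    · -- m > 0 : both → +∞, price → A - B, A > B
      have hAgtB : B < A := by
        rw [hAB]
        nth_rewrite 1 [show B = B * 1 by ring]
        exact mul_lt_mul_of_pos_left (Real.one_lt_exp_iff.2 hm0) hBpos
      have hfrac : Tendsto (fun σ : ℝ => m / (σ * c)) l atTop := by
        simp only [div_eq_mul_inv]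
        exact Tendsto.const_mul_atTop hm0 hinv
      have hd1 : Tendsto (fun σ => bsD1 S K T r q σ) l atTop := by
        refine (tendsto_nhds_add_atTop hsc hfrac).congr' ?_
        filter_upwards [hmem] with σ hσ
        rw [hd1eq σ (ne_of_gt hσ)]; ring
      have hd2 : Tendsto (fun σ => bsD2 S K T r q σ) l atTop := by
        refine (tendsto_nhds_add_atTop (hsc.neg) hfrac).congr' ?_
        filter_upwards [hmem] with σ hσ
        rw [hd2eq σ (ne_of_gt hσ)]; ring
      have := key 1 1 (cdf_top.comp hd1) (cdf_top.comp hd2)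
      simpa [max_eq_left (by linarith : (0:ℝ) ≤ A - B)] using this
  · -- σ → ∞
    have hmem : ∀ᶠ σ : ℝ in atTop, 0 < σ := eventually_gt_atTop 0
    have hfrac : Tendsto (fun σ : ℝ => m / (σ * c)) atTop (nhds 0) := by
      simp only [div_eq_mul_inv, mul_inv]
      have : Tendsto (fun σ : ℝ => σ⁻¹) atTop (nhds 0) := tendsto_inv_atTop_zero
      have h2 : Tendsto (fun σ : ℝ => m * (σ⁻¹ * c⁻¹)) atTop (nhds (m * (0 * c⁻¹))) :=
        (this.mul_const c⁻¹).const_mul m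
      simpa [mul_comm] using h2
    have hsc : Tendsto (fun σ : ℝ => σ * c / 2) atTop atTop :=
      (tendsto_id.atTop_mul_const hc).atTop_mul_const (by norm_num : (0:ℝ) < 1/2) |>.congr
        (fun σ => by simp only [id_eq]; ring)
    have hd1 : Tendsto (fun σ => bsD1 S K T r q σ) atTop atTop := by
      refine (tendsto_nhds_add_atTop hfrac hsc).congr' ?_
      filter_upwards [hmem] with σ hσ
      rw [hd1eq σ (ne_of_gt hσ)]
    have hd2 : Tendsto (fun σ => bsD2 S K T r q σ) atTop atBot := by
      refine (tendsto_nhds_add_atBot hfrac (tendsto_neg_atBot_iff.2 hsc)).congr' ?_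
      filter_upwards [hmem] with σ hσ
      rw [hd2eq σ (ne_of_gt hσ)]; ring
    have h := (Tendsto.const_mul A (cdf_top.comp hd1)).sub
      (Tendsto.const_mul B (cdf_bot.comp hd2))
    exact (show Tendsto (fun x => A * stdNormalCdf (bsD1 S K T r q x) - B * stdNormalCdf (bsD2 S K T r q x)) atTop (nhds A) by simpa using h)
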